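/- Let s : I → ℝ be twice differentiable, satisfy the Painlevé IV equation (in the limit sense, i.e. 2·s·s'' − (s')² = s²·(3s + 2t)·(s + 2t)) on the open interval I, with s(t) > 0 for all t ∈ I \ {a} and s(a) = 0. Then the function √s : I → ℝ does NOT satisfy 4·σ'' = σ·(3σ² + 2t)·(σ² + 2t) on I. -/

import Mathlib

theorem stmt_8 (I : Set ℝ) (hI : IsOpen I) (hI' : IsPreconnected I) (s : ℝ → ℝ) (a : ℝ) (ha : a ∈ I)
    (hs1 : ∀ t ∈ I, DifferentiableAt ℝ s t)
    (hs2 : ∀ t ∈ I, DifferentiableAt ℝ (deriv s) t)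
    (heq : ∀ t ∈ I, 2 * s t * deriv (deriv s) t - (deriv s t) ^ 2
      = (s t) ^ 2 * (3 * s t + 2 * t) * (s t + 2 * t))
    (hpos : ∀ t ∈ I \ {a}, 0 < s t) (h0 : s a = 0) :
    ¬ ((∀ t ∈ I, DifferentiableAt ℝ (fun u => Real.sqrt (s u)) t) ∧
       (∀ t ∈ I, DifferentiableAt ℝ (deriv (fun u => Real.sqrt (s u))) t) ∧
       (∀ t ∈ I, 4 * deriv (deriv (fun u => Real.sqrt (s u))) t
         = Real.sqrt (s t) * (3 * (Real.sqrt (s t)) ^ 2 + 2 * t)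
           * ((Real.sqrt (s t)) ^ 2 + 2 * t))) := by
  rintro ⟨hd1, hd2, hode⟩
  set σ : ℝ → ℝ := fun u => Real.sqrt (s u) with hσdef
  have hσnn : ∀ t, 0 ≤ σ t := fun t => Real.sqrt_nonneg _
  have hσa : σ a = 0 := by simp [hσdef, h0]
  have hmin : IsLocalMin σ a :=
    Filter.Eventually.of_forall (fun x => by rw [hσa]; exact hσnn x)
  have hderiva : deriv σ a = 0 := hmin.deriv_eq_zero
  obtain ⟨δ, hδ, hball⟩ := Metric.isOpen_iff.mp hI a ha
  set b := a + δ / 2 with hbdef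
  have hab : a < b := by simp only [hbdef]; linarith
  have hJI : Set.Icc a b ⊆ I := by
    intro t ht
    apply hball
    simp only [Metric.mem_ball, Real.dist_eq, abs_lt]
    obtain ⟨h1, h2⟩ := ht
    constructor <;> simp only [hbdef] at h2 <;> linarith
  -- the factor g so that σ'' = σ * g
  set g : ℝ → ℝ := fun t => (3 * (σ t) ^ 2 + 2 * t) * ((σ t) ^ 2 + 2 * t) / 4 with hgdef
  have hσc : ContinuousOn σ (Set.Icc a b) :=
    fun t ht => ((hd1 t (hJI ht)).continuousAt).continuousWithinAt
  have hgc : ContinuousOn g (Set.Icc a b) := by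
    apply ContinuousOn.div_const
    exact ((continuousOn_const.mul (hσc.pow 2)).add
      (continuousOn_const.mul continuousOn_id)).mul
      ((hσc.pow 2).add (continuousOn_const.mul continuousOn_id))
  obtain ⟨C, hC⟩ := (isCompact_Icc).exists_bound_of_continuousOn hgc
  have haJ : a ∈ Set.Icc a b := Set.left_mem_Icc.mpr hab.le
  have hbJ : b ∈ Set.Icc a b := Set.right_mem_Icc.mpr hab.le
  have hC0 : 0 ≤ C := le_trans (norm_nonneg _) (hC a haJ)
  -- energy
  set w : ℝ → ℝ := fun t => (σ t) ^ 2 + (deriv σ t) ^ 2 with hwdef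
  have hw : ∀ t ∈ I, HasDerivAt w (2 * σ t * deriv σ t * (1 + g t)) t := by
    intro t ht
    have h1 : HasDerivAt σ (deriv σ t) t := (hd1 t ht).hasDerivAt
    have h2 : HasDerivAt (deriv σ) (deriv (deriv σ) t) t := (hd2 t ht).hasDerivAt
    have hode' : deriv (deriv σ) t = σ t * g t := by
      have := hode t ht
      simp only [hgdef]
      simp only [hσdef] at *
      linarith
    have h3 := (h1.pow 2).add (h2.pow 2)
    refine h3.congr_deriv ?_
    rw [hode']
    ring
  set C1 : ℝ := 1 + C with hC1def
  set φ : ℝ → ℝ := fun t => w t * Real.exp (-C1 * t) with hφdef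
  have hφd : ∀ t ∈ I, HasDerivAt φ
      ((2 * σ t * deriv σ t * (1 + g t) - C1 * w t) * Real.exp (-C1 * t)) t := by
    intro t ht
    have he : HasDerivAt (fun x : ℝ => Real.exp (-C1 * x)) (Real.exp (-C1 * t) * (-C1)) t := by
      have : HasDerivAt (fun x : ℝ => -C1 * x) (-C1) t := by
        simpa using (hasDerivAt_id t).const_mul (-C1)
      exact this.exp
    have := (hw t ht).mul he
    refine this.congr_deriv ?_
    ring
  have hφ' : ∀ t ∈ Set.Icc a b, deriv φ t ≤ 0 := by
    intro t ht
    have htI := hJI ht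
    rw [(hφd t htI).deriv]
    have habs : |g t| ≤ C := by
      have := hC t ht
      rwa [Real.norm_eq_abs] at this
    have key : 2 * σ t * deriv σ t * (1 + g t) ≤ C1 * w t := by
      have h1 : |2 * σ t * deriv σ t| ≤ (σ t) ^ 2 + (deriv σ t) ^ 2 := by
        rw [abs_le]
        constructor
        · nlinarith [sq_nonneg (σ t + deriv σ t)]
        · nlinarith [sq_nonneg (σ t - deriv σ t)]
      have h2 : |1 + g t| ≤ 1 + C := by
        calc |1 + g t| ≤ |(1:ℝ)| + |g t| := abs_add_le _ _
          _ = 1 + |g t| := by rw [abs_one]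
          _ ≤ 1 + C := by linarith
      calc 2 * σ t * deriv σ t * (1 + g t) ≤ |2 * σ t * deriv σ t * (1 + g t)| := le_abs_self _
        _ = |2 * σ t * deriv σ t| * |1 + g t| := abs_mul _ _
        _ ≤ ((σ t) ^ 2 + (deriv σ t) ^ 2) * (1 + C) := by
            apply mul_le_mul h1 h2 (abs_nonneg _)
            positivity
        _ = C1 * w t := by simp only [hC1def, hwdef]; ring
    apply mul_nonpos_of_nonpos_of_nonneg
    · linarith
    · exact (Real.exp_pos _).le
  have hφc : ContinuousOn φ (Set.Icc a b) :=
    fun t ht => ((hφd t (hJI ht)).continuousAt).continuousWithinAt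
  have hmono : AntitoneOn φ (Set.Icc a b) := by
    apply antitoneOn_of_deriv_nonpos (convex_Icc a b) hφc
    · intro t ht
      rw [interior_Icc] at ht
      exact ((hφd t (hJI (Set.Ioo_subset_Icc_self ht))).differentiableAt).differentiableWithinAt
    · intro t ht
      rw [interior_Icc] at ht
      exact hφ' t (Set.Ioo_subset_Icc_self ht)
  have hba : φ b ≤ φ a := hmono haJ hbJ hab.le
  have hφa : φ a = 0 := by simp [hφdef, hwdef, hσa, hderiva]
  have hexp : 0 < Real.exp (-C1 * b) := Real.exp_pos _
  have hwb : w b ≤ 0 := by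
    by_contra hcon
    push_neg at hcon
    have : 0 < φ b := by
      simp only [hφdef]
      positivity
    linarith
  have hσb2 : (σ b) ^ 2 ≤ 0 := by
    have := sq_nonneg (deriv σ b)
    simp only [hwdef] at hwb
    linarith
  have hσb : σ b = 0 := by
    have h := le_antisymm hσb2 (sq_nonneg _)
    exact (pow_eq_zero_iff two_ne_zero).mp h
  have hbI : b ∈ I := hJI hbJ
  have hbne : b ≠ a := by
    simp only [hbdef]
    intro h
    linarith [hδ]
  have hsb := hpos b ⟨hbI, hbne⟩
  have : (0:ℝ) < Real.sqrt (s b) := Real.sqrt_pos.mpr hsb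
  simp only [hσdef] at hσb
  linarith
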